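/- If symmetric matrices satisfy 0 ≺ X and the block matrix [[X, I],[I, Y]] ≻ 0, then all eigenvalues of the product XY are real and positive; in particular tr(XY) > 0 and det(XY) > 0, so det(I − XY) ≠ 0 provided additionally 1 is not an eigenvalue of XY — and indeed [[X,I],[I,Y]] ≻ 0 implies every eigenvalue of XY is strictly greater than 1. -/

import Mathlib

open Matrix Polynomial
open scoped ComplexOrder

private lemma eval_charpoly_det {m : Type*} [Fintype m] [DecidableEq m] {K : Type*} [CommRing K]
    (M : Matrix m m K) (μ : K) :
    M.charpoly.eval μ = (μ • (1 : Matrix m m K) - M).det := by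
  rw [Matrix.charpoly, ← Polynomial.coe_evalRingHom, RingHom.map_det]
  congr 1
  ext i j
  by_cases hij : i = j
  · subst hij
    simp [Matrix.charmatrix_apply_eq, Matrix.one_apply_eq]
  · simp [Matrix.charmatrix_apply_ne _ _ _ hij, Matrix.one_apply_ne hij]

private lemma posDef_toComplex {m : Type*} [Fintype m] [DecidableEq m] {A : Matrix m m ℝ}
    (hA : A.PosDef) : (A.map (algebraMap ℝ ℂ)).PosDef := by
  set S := (by open scoped MatrixOrder in exact CFC.sqrt A : Matrix m m ℝ) with hSdef
  have hSherm : S.IsHermitian := by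
    open scoped MatrixOrder in exact (Matrix.nonneg_iff_posSemidef.mp (CFC.sqrt_nonneg A)).isHermitian
  have hSS : S * S = A := by
    open scoped MatrixOrder in exact CFC.sqrt_mul_sqrt_self A (Matrix.nonneg_iff_posSemidef.mpr hA.posSemidef)
  have hSdet : IsUnit S.det := by
    refine isUnit_iff_ne_zero.mpr fun h0 => ?_
    have : S.det * S.det = A.det := by rw [← Matrix.det_mul, hSS]
    rw [h0, zero_mul] at this
    exact hA.det_pos.ne' this.symm
  set f := algebraMap ℝ ℂ
  have hsemiconj : Function.Semiconj (f : ℝ → ℂ) star star := fun r => by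
    simp only [star_trivial]
    exact (Complex.conj_ofReal r).symm
  set B := S.map f with hBdef
  have hBherm : B.IsHermitian := hSherm.map f hsemiconj
  have hAB : A.map f = Bᴴ * B := by
    rw [hBherm.eq, ← Matrix.map_mul, hSS]
  have hBinj : Function.Injective B.mulVec := by
    refine Matrix.mulVec_injective_iff_isUnit.mpr ((Matrix.isUnit_iff_isUnit_det B).mpr ?_)
    rw [hBdef, ← RingHom.mapMatrix_apply, ← RingHom.map_det]
    refine isUnit_iff_ne_zero.mpr fun hh => hSdet.ne_zero ?_
    have : ((S.det : ℝ) : ℂ) = 0 := hh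
    exact_mod_cast this
  refine posDef_iff_dotProduct_mulVec.mpr ⟨?_, ?_⟩
  · rw [hAB]; exact Matrix.isHermitian_conjTranspose_mul_self B
  · intro x hx
    rw [hAB, ← mulVec_mulVec, dotProduct_mulVec, vecMul_conjTranspose, star_star]
    refine dotProduct_star_self_pos_iff.mpr fun h0 => hx (hBinj ?_)
    rw [h0, mulVec_zero]

private lemma posDef_conj_real {m : Type*} [Fintype m] [DecidableEq m] {A S : Matrix m m ℝ}
    (hA : A.PosDef) (hS : S.IsHermitian) (hSdet : IsUnit S.det) : (S * A * S).PosDef := by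
  have hSinj : Function.Injective S.mulVec :=
    Matrix.mulVec_injective_iff_isUnit.mpr ((Matrix.isUnit_iff_isUnit_det S).mpr hSdet)
  refine posDef_iff_dotProduct_mulVec.mpr ⟨?_, ?_⟩
  · show (S * A * S)ᴴ = S * A * S
    rw [Matrix.conjTranspose_mul, Matrix.conjTranspose_mul, hA.1.eq, hS.eq, Matrix.mul_assoc]
  · intro x hx
    have hmv : (S * A * S) *ᵥ x = S *ᵥ (A *ᵥ (S *ᵥ x)) := by
      rw [← mulVec_mulVec, ← mulVec_mulVec]
    have key : star x ᵥ* S = star (S *ᵥ x) := by rw [star_mulVec, hS.eq]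
    rw [hmv, dotProduct_mulVec, key]
    exact hA.dotProduct_mulVec_pos (fun h0 => hx (hSinj (by rw [h0, mulVec_zero])))

private lemma posDef_trace_pos {m : Type*} [Fintype m] [DecidableEq m] [Nonempty m]
    {A : Matrix m m ℝ} (hA : A.PosDef) : 0 < A.trace := by
  rw [Matrix.trace]
  refine Finset.sum_pos (fun i _ => ?_) Finset.univ_nonempty
  have h1 := hA.dotProduct_mulVec_pos (x := Pi.single i 1) (by
    intro h0
    have := congrFun h0 i
    simp at this)
  simpa [Matrix.diag, mulVec_single, dotProduct, Pi.single_apply, Finset.sum_ite_eq,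
    Finset.sum_ite_eq'] using h1

/-- If X ≻ 0 and [[X,I],[I,Y]] ≻ 0 (X, Y symmetric), then every (complex)
eigenvalue of XY is real and strictly greater than 1; in particular
tr(XY) > 0, det(XY) > 0, and det(I − XY) ≠ 0. -/
theorem eigenvalues_XY_gt_one (n : ℕ) (hn : 0 < n) (X Y : Matrix (Fin n) (Fin n) ℝ)
    (hX : X.IsSymm) (hY : Y.IsSymm) (hXpos : X.PosDef)
    (h : (Matrix.fromBlocks X 1 1 Y).PosDef) :
    (∀ μ : ℂ, ((X * Y).map (algebraMap ℝ ℂ)).charpoly.IsRoot μ →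
        μ.im = 0 ∧ 1 < μ.re) ∧
    0 < (X * Y).trace ∧
    0 < (X * Y).det ∧
    (1 - X * Y).det ≠ 0 := by
  haveI : Nonempty (Fin n) := ⟨⟨0, hn⟩⟩
  haveI : Invertible X := hXpos.isUnit.invertible
  have hYherm : Y.IsHermitian := by
    rw [Matrix.IsHermitian, conjTranspose_eq_transpose_of_trivial]; exact hY
  -- strict Schur complement: Y - X⁻¹ ≻ 0
  have hYX : (Y - X⁻¹).PosDef := by
    refine posDef_iff_dotProduct_mulVec.mpr ⟨hYherm.sub hXpos.1.inv, fun x hx => ?_⟩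
    have hv : (-((X⁻¹ * (1 : Matrix (Fin n) (Fin n) ℝ)) *ᵥ x) ⊕ᵥ x) ≠ 0 := by
      intro h0
      apply hx
      funext i
      exact congrFun h0 (Sum.inr i)
    have h2 := h.dotProduct_mulVec_pos hv
    have hB : Matrix.fromBlocks X 1 1 Y
        = Matrix.fromBlocks X 1 (1 : Matrix (Fin n) (Fin n) ℝ)ᴴ Y := by
      rw [conjTranspose_one]
    rw [hB, dotProduct_mulVec,
      schur_complement_eq₁₁ (1 : Matrix (Fin n) (Fin n) ℝ) Y _ _ hXpos.1, neg_add_cancel] at h2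
    simp only [star_zero, zero_vecMul, zero_dotProduct, zero_add, conjTranspose_one,
      Matrix.mul_one, Matrix.one_mul] at h2
    rwa [← dotProduct_mulVec] at h2
  have hXinv : (X⁻¹).PosDef := hXpos.inv
  have hYpos : Y.PosDef := by
    have := hYX.add hXinv
    rwa [sub_add_cancel] at this
  -- square root of X
  set S := (by open scoped MatrixOrder in exact CFC.sqrt X : Matrix (Fin n) (Fin n) ℝ) with hSdef
  have hSherm : S.IsHermitian := by
    open scoped MatrixOrder in exact (Matrix.nonneg_iff_posSemidef.mp (CFC.sqrt_nonneg X)).isHermitian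
  have hSS : S * S = X := by
    open scoped MatrixOrder in exact CFC.sqrt_mul_sqrt_self X (Matrix.nonneg_iff_posSemidef.mpr hXpos.posSemidef)
  have hSdet : IsUnit S.det := by
    refine isUnit_iff_ne_zero.mpr fun h0 => ?_
    have : S.det * S.det = X.det := by rw [← Matrix.det_mul, hSS]
    rw [h0, zero_mul] at this
    exact hXpos.det_pos.ne' this.symm
  have hSXS : S * X⁻¹ * S = 1 := by
    rw [← hSS, Matrix.mul_inv_rev]
    calc S * (S⁻¹ * S⁻¹) * S = (S * S⁻¹) * (S⁻¹ * S) := by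
          rw [Matrix.mul_assoc, Matrix.mul_assoc, Matrix.mul_assoc]
      _ = 1 := by rw [Matrix.mul_nonsing_inv _ hSdet, Matrix.nonsing_inv_mul _ hSdet, one_mul]
  have hA : (S * (Y - X⁻¹) * S).PosDef := posDef_conj_real hYX hSherm hSdet
  have hA1 : S * Y * S - 1 = S * (Y - X⁻¹) * S := by
    rw [Matrix.mul_sub, Matrix.sub_mul, hSXS]
  have hSYS : (S * Y * S).PosDef := posDef_conj_real hYpos hSherm hSdet
  set f := algebraMap ℝ ℂ
  refine ⟨?_, ?_, ?_, ?_⟩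
  · -- eigenvalues
    intro μ hμ
    have hdet0 : (μ • (1 : Matrix (Fin n) (Fin n) ℂ) - (X * Y).map f).det = 0 := by
      rw [← eval_charpoly_det]; exact hμ
    obtain ⟨v, hv0, hv⟩ := Matrix.exists_mulVec_eq_zero_iff.mpr hdet0
    have hMv : (X * Y).map f *ᵥ v = μ • v := by
      have := hv
      rw [sub_mulVec, smul_mulVec, one_mulVec, sub_eq_zero] at this
      exact this.symm
    have hZX : (X⁻¹.map f) * (X.map f) = 1 := by
      rw [← Matrix.map_mul, Matrix.nonsing_inv_mul _ (isUnit_iff_ne_zero.mpr hXpos.det_pos.ne')]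
      exact Matrix.map_one f (map_zero f) (map_one f)
    have hYv : (Y.map f) *ᵥ v = μ • ((X⁻¹.map f) *ᵥ v) := by
      have h1 : (X.map f) *ᵥ ((Y.map f) *ᵥ v) = μ • v := by
        rw [mulVec_mulVec, ← Matrix.map_mul]; exact hMv
      calc (Y.map f) *ᵥ v = ((X⁻¹.map f) * (X.map f)) *ᵥ ((Y.map f) *ᵥ v) := by
            rw [hZX, one_mulVec]
        _ = (X⁻¹.map f) *ᵥ ((X.map f) *ᵥ ((Y.map f) *ᵥ v)) := by rw [← mulVec_mulVec]
        _ = (X⁻¹.map f) *ᵥ (μ • v) := by rw [h1]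
        _ = μ • ((X⁻¹.map f) *ᵥ v) := by rw [mulVec_smul]
    set a := star v ⬝ᵥ ((Y.map f) *ᵥ v) with ha
    set b := star v ⬝ᵥ ((X⁻¹.map f) *ᵥ v) with hbdef
    have hb : 0 < b := (posDef_toComplex hXinv).dotProduct_mulVec_pos hv0
    have hab : 0 < a - b := by
      have h3 := (posDef_toComplex hYX).dotProduct_mulVec_pos hv0
      rw [Matrix.map_sub (⇑f) (fun p q => map_sub f p q), sub_mulVec, dotProduct_sub] at h3
      exact h3
    have hamu : a = μ * b := by
      rw [ha, hYv, dotProduct_smul, smul_eq_mul]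
    rw [Complex.pos_iff] at hb hab
    obtain ⟨hbre, hbim⟩ := hb
    obtain ⟨habre, habim⟩ := hab
    have hbim' : b.im = 0 := hbim.symm
    have h4 : a.im = μ.im * b.re := by
      rw [hamu, Complex.mul_im, hbim', mul_zero, zero_add]
    have h5 : a.im = 0 := by
      have h6 := habim.symm
      rw [Complex.sub_im, hbim'] at h6; linarith
    have him : μ.im = 0 :=
      (mul_eq_zero.mp (h4.symm.trans h5)).resolve_right hbre.ne'
    have h7 : a.re = μ.re * b.re := by
      rw [hamu, Complex.mul_re, hbim', mul_zero, sub_zero]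
    have h8 : b.re < a.re := by
      have h9 := habre
      rw [Complex.sub_re] at h9; linarith
    rw [h7] at h8
    exact ⟨him, (lt_mul_iff_one_lt_left hbre).mp h8⟩
  · -- trace
    have htr : (X * Y).trace = (S * Y * S).trace := by
      rw [← hSS, Matrix.mul_assoc, Matrix.trace_mul_comm]
    rw [htr]
    exact posDef_trace_pos hSYS
  · rw [Matrix.det_mul]
    exact mul_pos hXpos.det_pos hYpos.det_pos
  · have h1 : (1 - X * Y).det = (1 - S * Y * S).det := by
      rw [← hSS, Matrix.mul_assoc, Matrix.det_one_sub_mul_comm]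
    have h2 : (1 - S * Y * S).det = (-1) ^ n * (S * (Y - X⁻¹) * S).det := by
      rw [← neg_sub (S * Y * S) 1, Matrix.det_neg, hA1, Fintype.card_fin]
    rw [h1, h2]
    exact mul_ne_zero (pow_ne_zero _ (by norm_num)) hA.det_pos.ne'
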